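/- Suppose {U_m} is a sequence of measurable subsets of [0,1)^n with μ(U_m) ≤ 2^{-m} for all m ≥ 1, and define d(Q) = Σ_{m=1}^∞ μ(U_m ∩ Q)/μ(Q) for half-open dyadic cubes Q ⊆ [0,1)^n. Then d is a well-defined martingale with d([0,1)^n) ≤ 1, and d succeeds (i.e., lim sup_{r→∞} d(Q_r(x)) = ∞) at every point x lying in the interior of U_m for all m. -/
import Mathlib


open MeasureTheory
open scoped ENNReal

/-- The half-open `r`-dyadic cube at `u`. -/
noncomputable def dCube (n r : ℕ) (u : Fin n → ℤ) : Set (Fin n → ℝ) :=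
  Set.univ.pi fun i => Set.Ico ((u i : ℝ) / 2 ^ r) (((u i : ℝ) + 1) / 2 ^ r)

/-- `d(Q) = ∑_{m ≥ 1} μ(U_m ∩ Q)/μ(Q)`. -/
noncomputable def sumMart (n : ℕ) (U : ℕ → Set (Fin n → ℝ)) (r : ℕ) (u : Fin n → ℤ) : ℝ≥0∞ :=
  ∑' m : ℕ, if 1 ≤ m then volume (U m ∩ dCube n r u) / volume (dCube n r u) else 0

lemma mem_Ico_iff_floor {s : ℕ} {k : ℤ} {y : ℝ} :
    y ∈ Set.Ico ((k:ℝ) / 2 ^ s) (((k:ℝ) + 1) / 2 ^ s) ↔ ⌊y * 2 ^ s⌋ = k := by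
  have h2 : (0:ℝ) < 2 ^ s := by positivity
  constructor
  · rintro ⟨h1, h3⟩
    rw [div_le_iff₀ h2] at h1
    rw [lt_div_iff₀ h2] at h3
    exact Int.floor_eq_iff.mpr ⟨by linarith, by push_cast; linarith⟩
  · intro h
    have h1 := Int.floor_le (y * 2 ^ s)
    have h3 := Int.lt_floor_add_one (y * 2 ^ s)
    rw [h] at h1 h3
    push_cast at h3
    exact ⟨by rw [div_le_iff₀ h2]; linarith, by rw [lt_div_iff₀ h2]; linarith⟩

lemma mem_dCube {n r : ℕ} {u : Fin n → ℤ} {x : Fin n → ℝ} :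
    x ∈ dCube n r u ↔ ∀ i, ⌊x i * 2 ^ r⌋ = u i := by
  simp only [dCube, Set.mem_pi, Set.mem_univ, forall_true_left]
  exact forall_congr' fun i => mem_Ico_iff_floor

lemma dCube_measurable (n r : ℕ) (u : Fin n → ℤ) : MeasurableSet (dCube n r u) :=
  MeasurableSet.univ_pi fun i => measurableSet_Ico

lemma volume_dCube (n r : ℕ) (u : Fin n → ℤ) :
    volume (dCube n r u) = (((2:ℝ≥0∞) ^ r)⁻¹) ^ n := by
  rw [dCube, volume_pi_pi]
  have h : ∀ i : Fin n,
      volume (Set.Ico ((u i : ℝ) / 2 ^ r) (((u i : ℝ) + 1) / 2 ^ r)) = ((2:ℝ≥0∞) ^ r)⁻¹ := by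
    intro i
    rw [Real.volume_Ico, show ((u i:ℝ)+1)/2^r - (u i:ℝ)/2^r = ((2:ℝ)^r)⁻¹ by ring]
    rw [ENNReal.ofReal_inv_of_pos (by positivity), ENNReal.ofReal_pow (by norm_num)]
    norm_num
  simp [h]

lemma volume_dCube_ne_zero (n r : ℕ) (u : Fin n → ℤ) : volume (dCube n r u) ≠ 0 := by
  rw [volume_dCube]
  exact pow_ne_zero _ (ENNReal.inv_ne_zero.mpr (ENNReal.pow_ne_top (by norm_num)))

lemma volume_dCube_ne_top (n r : ℕ) (u : Fin n → ℤ) : volume (dCube n r u) ≠ ⊤ := by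
  rw [volume_dCube]
  exact ENNReal.pow_ne_top (ENNReal.inv_ne_top.mpr (pow_ne_zero _ (by norm_num)))

lemma dCube_disjoint {n s : ℕ} {v w : Fin n → ℤ} (h : v ≠ w) :
    Disjoint (dCube n s v) (dCube n s w) := by
  rw [Set.disjoint_left]
  intro x hxv hxw
  exact h (funext fun i => (mem_dCube.mp hxv i).symm.trans (mem_dCube.mp hxw i))

lemma dCube_eq_iUnion (n r : ℕ) (u : Fin n → ℤ) :
    dCube n r u = ⋃ a : Fin n → Fin 2, dCube n (r+1) (fun i => 2 * u i + (a i : ℤ)) := by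
  ext x
  simp only [Set.mem_iUnion, mem_dCube]
  constructor
  · intro h
    have key : ∀ i : Fin n, ⌊x i * 2 ^ (r+1)⌋ = 2 * u i ∨ ⌊x i * 2 ^ (r+1)⌋ = 2 * u i + 1 := by
      intro i
      have hf := h i
      have h1 : ((u i : ℝ)) ≤ x i * 2 ^ r := by rw [← hf]; exact Int.floor_le _
      have h2 : x i * 2 ^ r < (u i : ℝ) + 1 := by
        have h2' := Int.lt_floor_add_one (x i * 2 ^ r)
        rw [hf] at h2'; exact_mod_cast h2'
      have heq : x i * 2 ^ (r+1) = (x i * 2 ^ r) * 2 := by ring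
      have hl : ((2 * u i : ℤ) : ℝ) ≤ x i * 2 ^ (r+1) := by push_cast; linarith
      have hu : x i * 2 ^ (r+1) < ((2 * u i + 2 : ℤ) : ℝ) := by push_cast; linarith
      have hl' := Int.le_floor.mpr hl
      have hu' := Int.floor_lt.mpr hu
      omega
    refine ⟨fun i => if ⌊x i * 2 ^ (r+1)⌋ = 2 * u i then 0 else 1, fun i => ?_⟩
    rcases key i with h1 | h1 <;> simp [h1] <;> omega
  · rintro ⟨a, ha⟩ i
    have hf := ha i
    have hcz : (0:ℤ) ≤ (a i : ℤ) ∧ ((a i : ℤ)) ≤ 1 := by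
      have := (a i).isLt; omega
    have hc0 : (0:ℝ) ≤ ((a i : ℤ) : ℝ) := by exact_mod_cast hcz.1
    have hc1 : ((a i : ℤ) : ℝ) ≤ 1 := by exact_mod_cast hcz.2
    have h1 : ((2 * u i + (a i:ℤ) : ℤ) : ℝ) ≤ x i * 2 ^ (r+1) := by
      rw [← hf]; exact Int.floor_le _
    have h2 : x i * 2 ^ (r+1) < ((2 * u i + (a i:ℤ) : ℤ) : ℝ) + 1 := by
      rw [← hf]; exact Int.lt_floor_add_one _
    have heq : x i * 2 ^ (r+1) = (x i * 2 ^ r) * 2 := by ring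
    push_cast at h1 h2 hc0 hc1
    rw [Int.floor_eq_iff]
    constructor
    · linarith
    · push_cast; linarith

lemma child_inj {n : ℕ} (u : Fin n → ℤ) :
    Function.Injective (fun a : Fin n → Fin 2 => (fun i => 2 * u i + (a i : ℤ))) := by
  intro a b hab
  funext i
  have := congrFun hab i
  simp only at this
  have : ((a i : ℤ)) = (b i : ℤ) := by omega
  have hv : (a i : ℕ) = (b i : ℕ) := by exact_mod_cast this
  exact Fin.ext hv

lemma meas_inter_sum {n : ℕ} (r : ℕ) (u : Fin n → ℤ) (V : Set (Fin n → ℝ))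
    (hV : MeasurableSet V) :
    volume (V ∩ dCube n r u) =
      ∑ a : Fin n → Fin 2, volume (V ∩ dCube n (r+1) (fun i => 2 * u i + (a i : ℤ))) := by
  rw [dCube_eq_iUnion n r u, Set.inter_iUnion, measure_iUnion, tsum_fintype]
  · intro a b hab
    exact Disjoint.mono Set.inter_subset_right Set.inter_subset_right
      (dCube_disjoint (fun h => hab (child_inj u h)))
  · exact fun a => hV.inter (dCube_measurable _ _ _)

lemma volume_dCube_succ {n : ℕ} (r : ℕ) (u : Fin n → ℤ) (a : Fin n → Fin 2) :
    volume (dCube n r u) =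
      2 ^ n * volume (dCube n (r+1) (fun i => 2 * u i + (a i : ℤ))) := by
  rw [volume_dCube, volume_dCube, ← mul_pow]
  congr 1
  rw [pow_succ, ENNReal.mul_inv (by norm_num) (by norm_num),
    mul_comm ((2:ℝ≥0∞) ^ r)⁻¹ 2⁻¹, ← mul_assoc,
    ENNReal.mul_inv_cancel (by norm_num) (by norm_num), one_mul]

/-- if `μ(U_m) ≤ 2^{-m}` for `m ≥ 1`, then
`d(Q) = ∑_{m≥1} μ(U_m ∩ Q)/μ(Q)` is a martingale with `d([0,1)^n) ≤ 1`, and `d`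
succeeds (`limsup_r d(Q_r(x)) = ∞`) at every point lying in the interior of all `U_m`. -/
theorem stmt2 (n : ℕ) (U : ℕ → Set (Fin n → ℝ)) (hU : ∀ m, MeasurableSet (U m))
    (hUsub : ∀ m, U m ⊆ dCube n 0 0)
    (hμ : ∀ m, 1 ≤ m → volume (U m) ≤ ((2 : ℝ≥0∞) ^ m)⁻¹) :
    (∀ (r : ℕ) (u : Fin n → ℤ),
      sumMart n U r u =
        ((2 : ℝ≥0∞) ^ n)⁻¹ *
          ∑ a : Fin n → Fin 2, sumMart n U (r + 1) (fun i => 2 * u i + (a i : ℤ))) ∧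
    sumMart n U 0 0 ≤ 1 ∧
    (∀ x : Fin n → ℝ, x ∈ Set.univ.pi (fun _ => Set.Ico (0 : ℝ) 1) →
      (∀ m, 1 ≤ m → x ∈ interior (U m)) →
      Filter.limsup (fun r : ℕ => sumMart n U r fun i => ⌊x i * 2 ^ r⌋)
        Filter.atTop = ⊤) := by
  refine ⟨?_, ?_, ?_⟩
  · -- martingale property
    intro r u
    have hkey : ∀ m : ℕ,
        (if 1 ≤ m then volume (U m ∩ dCube n r u) / volume (dCube n r u) else 0) =
          ((2:ℝ≥0∞) ^ n)⁻¹ * ∑ a : Fin n → Fin 2,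
            (if 1 ≤ m then
              volume (U m ∩ dCube n (r+1) (fun i => 2 * u i + (a i : ℤ))) /
                volume (dCube n (r+1) (fun i => 2 * u i + (a i : ℤ))) else 0) := by
      intro m
      split
      · rw [meas_inter_sum r u (U m) (hU m)]
        have hv : ∀ a : Fin n → Fin 2,
            volume (dCube n (r+1) (fun i => 2 * u i + (a i : ℤ))) =
              (((2:ℝ≥0∞) ^ (r+1))⁻¹) ^ n := fun a => volume_dCube _ _ _
        have hQ : volume (dCube n r u) = 2 ^ n * (((2:ℝ≥0∞) ^ (r+1))⁻¹) ^ n := by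
          rw [volume_dCube_succ r u (fun _ => 0), hv]
        simp only [hv, div_eq_mul_inv, ← Finset.sum_mul, hQ]
        rw [ENNReal.mul_inv (Or.inl (by positivity)) (Or.inl (ENNReal.pow_ne_top (by norm_num)))]
        ring
      · simp
    unfold sumMart
    rw [tsum_congr hkey, ENNReal.tsum_mul_left]
    congr 1
    exact Summable.tsum_finsetSum fun a _ => ENNReal.summable
  · -- total mass at most one
    have hQ0 : volume (dCube n 0 (0 : Fin n → ℤ)) = 1 := by
      rw [volume_dCube]; norm_num
    have hle : ∀ m : ℕ,
        (if 1 ≤ m then volume (U m ∩ dCube n 0 0) / volume (dCube n 0 0) else 0) ≤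
          (if 1 ≤ m then ((2:ℝ≥0∞) ^ m)⁻¹ else 0) := by
      intro m
      split
      · rw [hQ0, div_one, Set.inter_eq_self_of_subset_left (hUsub m)]
        exact hμ m ‹_›
      · exact le_refl _
    refine le_trans (ENNReal.tsum_le_tsum hle) (le_of_eq ?_)
    rw [tsum_eq_zero_add' ENNReal.summable]
    have h1 : ∀ m : ℕ, (if 1 ≤ m + 1 then ((2:ℝ≥0∞) ^ (m+1))⁻¹ else 0) = 2⁻¹ * (2⁻¹ : ℝ≥0∞) ^ m := by
      intro m
      rw [if_pos (Nat.succ_le_succ (Nat.zero_le m)), pow_succ, ENNReal.mul_inv (by norm_num) (by norm_num), ← ENNReal.inv_pow, mul_comm]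
    simp only [h1]
    rw [ENNReal.tsum_mul_left, ENNReal.tsum_geometric, ENNReal.one_sub_inv_two, inv_inv]
    simp [ENNReal.inv_mul_cancel (two_ne_zero) (ENNReal.ofNat_ne_top)]
  · -- success at points in all interiors
    intro x hx hxint
    apply Filter.Tendsto.limsup_eq
    apply ENNReal.tendsto_nhds_top
    intro M
    have hev : ∀ m, 1 ≤ m → ∀ᶠ r : ℕ in Filter.atTop,
        dCube n r (fun i => ⌊x i * 2 ^ r⌋) ⊆ U m := by
      intro m hm
      obtain ⟨ε, hε, hball⟩ := Metric.isOpen_iff.mp isOpen_interior x (hxint m hm)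
      have htend : Filter.Tendsto (fun r : ℕ => ((2:ℝ)⁻¹) ^ r) Filter.atTop (nhds 0) :=
        tendsto_pow_atTop_nhds_zero_of_lt_one (by norm_num) (by norm_num)
      filter_upwards [htend.eventually_lt_const hε] with r hr y hy
      refine interior_subset (hball ?_)
      rw [Metric.mem_ball, dist_pi_lt_iff hε]
      intro i
      have hk := mem_dCube.mp hy i
      have hpow : (0:ℝ) < 2 ^ r := by positivity
      have hx1 : ((⌊x i * 2 ^ r⌋ : ℤ) : ℝ) ≤ x i * 2 ^ r := Int.floor_le _
      have hx2 : x i * 2 ^ r < ((⌊x i * 2 ^ r⌋ : ℤ) : ℝ) + 1 := Int.lt_floor_add_one _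
      have hy1 : ((⌊x i * 2 ^ r⌋ : ℤ) : ℝ) ≤ y i * 2 ^ r := by
        rw [← hk]; exact Int.floor_le _
      have hy2 : y i * 2 ^ r < ((⌊x i * 2 ^ r⌋ : ℤ) : ℝ) + 1 := by
        rw [← hk]; exact Int.lt_floor_add_one _
      rw [inv_pow] at hr
      rw [Real.dist_eq, abs_sub_lt_iff]
      have hd1 : y i - x i < ((2:ℝ) ^ r)⁻¹ := by
        rw [← one_div, lt_div_iff₀ hpow]; nlinarith
      have hd2 : x i - y i < ((2:ℝ) ^ r)⁻¹ := by
        rw [← one_div, lt_div_iff₀ hpow]; nlinarith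
      constructor <;> linarith
    have hall : ∀ᶠ r : ℕ in Filter.atTop, ∀ m ∈ Finset.Icc 1 (M+1),
        dCube n r (fun i => ⌊x i * 2 ^ r⌋) ⊆ U m := by
      rw [Filter.eventually_all_finset]
      exact fun m hm => hev m (Finset.mem_Icc.mp hm).1
    filter_upwards [hall] with r hr
    have hone : ∀ m ∈ Finset.Icc 1 (M+1),
        (if 1 ≤ m then volume (U m ∩ dCube n r (fun i => ⌊x i * 2 ^ r⌋)) /
            volume (dCube n r (fun i => ⌊x i * 2 ^ r⌋)) else 0) = 1 := by
      intro m hm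
      rw [if_pos (Finset.mem_Icc.mp hm).1,
        Set.inter_eq_self_of_subset_right (hr m hm),
        ENNReal.div_self (volume_dCube_ne_zero _ _ _) (volume_dCube_ne_top _ _ _)]
    calc (M:ℝ≥0∞) < ((M+1 : ℕ) : ℝ≥0∞) := by exact_mod_cast Nat.lt_succ_self M
      _ = ∑ m ∈ Finset.Icc 1 (M+1), (1:ℝ≥0∞) := by
          rw [Finset.sum_const, Nat.card_Icc]; simp
      _ = ∑ m ∈ Finset.Icc 1 (M+1),
            (if 1 ≤ m then volume (U m ∩ dCube n r (fun i => ⌊x i * 2 ^ r⌋)) /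
              volume (dCube n r (fun i => ⌊x i * 2 ^ r⌋)) else 0) :=
          (Finset.sum_congr rfl hone).symm
      _ ≤ sumMart n U r (fun i => ⌊x i * 2 ^ r⌋) := ENNReal.sum_le_tsum _
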